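/- Let m ≥ 1 and let t be an admissible word of length 2m. Then both half-doubles d₁(t) and d₂(t) are admissible words of length 2m. -/

import Mathlib

/-- A word of length `2*m`: a cyclic sequence of letter indices. -/
abbrev Word (m : ℕ) := ZMod (2*m) → ZMod (2*m)

/-- Rotation of a word by `r`. -/
def rot (m : ℕ) (t : Word m) (r : ZMod (2*m)) : Word m := fun k => t (k + r)

/-- `ε` is a decoration of the word `t`. -/
def IsDecoration (m : ℕ) (t : Word m) (ε : ZMod (2*m) → ℤ) : Prop :=
  (∀ k, ε k = 1 ∨ ε k = -1) ∧
  (∀ k, ε k = 1 → ε (k+1) = 1 → t (k+1) = t k + 1) ∧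
  (∀ k, ε k = -1 → ε (k+1) = -1 → t (k+1) = t k - 1) ∧
  (∀ k, ε k ≠ ε (k+1) → t (k+1) = t k)

/-- A word is admissible if it admits a decoration. -/
def Admissible (m : ℕ) (t : Word m) : Prop := ∃ ε, IsDecoration m t ε

/-- First half-double: `d₁(t)(k) = t(k)` for `0 ≤ k ≤ m-1`, and
`d₁(t)(k) = t(2m-1-k)` for `m ≤ k ≤ 2m-1`. -/
def d1 (m : ℕ) (t : Word m) : Word m := fun k =>
  if k.val < m then t k else t ((2*m - 1 - k.val : ℕ) : ZMod (2*m))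

/-- Second half-double: `d₂(t) = d₁(rotation of t by m)`. -/
def d2 (m : ℕ) (t : Word m) : Word m := d1 m (rot m t (m : ZMod (2*m)))

lemma rot_admissible (m : ℕ) (t : Word m) (r : ZMod (2*m)) (ht : Admissible m t) :
    Admissible m (rot m t r) := by
  obtain ⟨ε, h1, h2, h3, h4⟩ := ht
  refine ⟨fun k => ε (k + r), fun k => h1 _, ?_, ?_, ?_⟩ <;> intro k <;>
    simp only [rot, add_right_comm k 1 r]
  · exact h2 (k + r)
  · exact h3 (k + r)
  · exact h4 (k + r)

lemma d1_admissible (m : ℕ) (hm : 1 ≤ m) (t : Word m) (ht : Admissible m t) :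
    Admissible m (d1 m t) := by
  obtain ⟨ε, hε1, hε2, hε3, hε4⟩ := ht
  haveI : NeZero (2*m) := ⟨by omega⟩
  set ε' : ZMod (2*m) → ℤ :=
    fun k => if k.val < m then ε k else -ε ((2*m - 1 - k.val : ℕ) : ZMod (2*m)) with hε'
  have key : ∀ k : ZMod (2*m),
      (ε' k = 1 → ε' (k+1) = 1 → d1 m t (k+1) = d1 m t k + 1) ∧
      (ε' k = -1 → ε' (k+1) = -1 → d1 m t (k+1) = d1 m t k - 1) ∧
      (ε' k ≠ ε' (k+1) → d1 m t (k+1) = d1 m t k) := by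
    intro k
    have hk : ((k.val : ℕ) : ZMod (2*m)) = k := ZMod.natCast_rightInverse k
    have ha : k.val < 2*m := ZMod.val_lt k
    have hk1 : k + 1 = ((k.val + 1 : ℕ) : ZMod (2*m)) := by push_cast [hk]; ring
    rcases lt_trichotomy (k.val + 1) m with hc | hc | hc
    · -- both in first half
      have v1 : (k+1).val = k.val + 1 := by
        rw [hk1, ZMod.val_natCast, Nat.mod_eq_of_lt (by omega)]
      have hA : d1 m t k = t k := by simp only [d1, if_pos (by omega : k.val < m)]
      have hB : d1 m t (k+1) = t (k+1) := by simp only [d1, v1, if_pos (by omega : k.val+1 < m)]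
      have hC : ε' k = ε k := by simp only [hε', if_pos (by omega : k.val < m)]
      have hD : ε' (k+1) = ε (k+1) := by simp only [hε', v1, if_pos (by omega : k.val+1 < m)]
      rw [hA, hB, hC, hD]
      exact ⟨hε2 k, hε3 k, hε4 k⟩
    · -- crossing the middle
      have v1 : (k+1).val = k.val + 1 := by
        rw [hk1, ZMod.val_natCast, Nat.mod_eq_of_lt (by omega)]
      have e2 : ((2*m - 1 - (k.val + 1) : ℕ) : ZMod (2*m)) = k := by
        rw [show (2*m - 1 - (k.val + 1) : ℕ) = k.val by omega, hk]
      have hA : d1 m t k = t k := by simp only [d1, if_pos (by omega : k.val < m)]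
      have hB : d1 m t (k+1) = t k := by
        simp only [d1, v1, if_neg (by omega : ¬ (k.val+1 < m)), e2]
      have hC : ε' k = ε k := by simp only [hε', if_pos (by omega : k.val < m)]
      have hD : ε' (k+1) = -ε k := by
        simp only [hε', v1, if_neg (by omega : ¬ (k.val+1 < m)), e2]
      rw [hA, hB, hC, hD]
      exact ⟨fun u v => by omega, fun u v => by omega, fun _ => rfl⟩
    · rcases lt_or_eq_of_le (by omega : k.val + 1 ≤ 2*m) with hd | hd
      · -- both in second half
        have v1 : (k+1).val = k.val + 1 := by
          rw [hk1, ZMod.val_natCast, Nat.mod_eq_of_lt hd]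
        set j : ZMod (2*m) := ((2*m - 1 - (k.val + 1) : ℕ) : ZMod (2*m)) with hj
        have e1 : ((2*m - 1 - k.val : ℕ) : ZMod (2*m)) = j + 1 := by
          rw [hj, show (2*m - 1 - k.val : ℕ) = (2*m - 1 - (k.val+1)) + 1 by omega]
          push_cast; ring
        have hA : d1 m t k = t (j + 1) := by
          simp only [d1, if_neg (by omega : ¬ k.val < m), e1]
        have hB : d1 m t (k+1) = t j := by
          simp only [d1, v1, if_neg (by omega : ¬ (k.val+1 < m)), hj]
        have hC : ε' k = -ε (j + 1) := by
          simp only [hε', if_neg (by omega : ¬ k.val < m), e1]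
        have hD : ε' (k+1) = -ε j := by
          simp only [hε', v1, if_neg (by omega : ¬ (k.val+1 < m)), hj]
        rw [hA, hB, hC, hD]
        refine ⟨fun u v => ?_, fun u v => ?_, fun u => ?_⟩
        · have := hε3 j (by omega) (by omega); rw [this]; ring
        · have := hε2 j (by omega) (by omega); rw [this]; ring
        · have := hε4 j (fun h => u (by rw [h])); rw [this]
      · -- wrap-around
        have hk10 : k + 1 = 0 := by rw [hk1, hd]; exact ZMod.natCast_self _
        have v0 : (0 : ZMod (2*m)).val = 0 := ZMod.val_zero
        have e2 : ((2*m - 1 - k.val : ℕ) : ZMod (2*m)) = 0 := by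
          rw [show (2*m - 1 - k.val : ℕ) = 0 by omega]; simp
        have hA : d1 m t k = t 0 := by
          simp only [d1, if_neg (by omega : ¬ k.val < m), e2]
        have hB : d1 m t (k+1) = t 0 := by
          rw [hk10]; simp only [d1, v0, if_pos (by omega : 0 < m)]
        have hC : ε' k = -ε 0 := by
          simp only [hε', if_neg (by omega : ¬ k.val < m), e2]
        have hD : ε' (k+1) = ε 0 := by
          rw [hk10]; simp only [hε', v0, if_pos (by omega : 0 < m)]
        rw [hA, hB, hC, hD]
        exact ⟨fun u v => by omega, fun u v => by omega, fun _ => rfl⟩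
  refine ⟨ε', fun k => ?_, fun k => (key k).1, fun k => (key k).2.1, fun k => (key k).2.2⟩
  simp only [hε']
  split
  · exact hε1 _
  · rcases hε1 (((2*m - 1 - k.val : ℕ)) : ZMod (2*m)) with h | h <;> simp [h]


/-- Both half-doubles of an admissible word are admissible. -/
theorem half_doubles_admissible (m : ℕ) (hm : 1 ≤ m) (t : Word m)
    (ht : Admissible m t) :
    Admissible m (d1 m t) ∧ Admissible m (d2 m t) := by
  exact ⟨d1_admissible m hm t ht,
    d1_admissible m hm _ (rot_admissible m t _ ht)⟩
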